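/- Let m ≥ 1, let E := GaloisField 2 m, let t be a natural number with 2·t < m, and let a : Fin (t+1) → E with a ≠ 0. Then the radical of the symmetric bilinear form B_a(x,y) = Tr(y · L_a(x)) has ZMod 2-dimension at most 2t; concretely, Fintype.card {x : E // ∀ y : E, Algebra.trace (ZMod 2) E (y * L_a x) = 0} ≤ 2^(2·t). Equivalently, the rank of B_a is at least m − 2t, so every nonzero matrix in the set M(t,m) has rank at least m − 2t. -/

import Mathlib

open Polynomial

/-- The linearized polynomial map
`L_a(x) = a₀ x + ∑_{j=1}^{t} (a_j x^{2^j} + a_j^{2^{m-j}} x^{2^{m-j}})` on `GF(2^m)`. -/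
noncomputable def La (m t : ℕ) (a : Fin (t + 1) → GaloisField 2 m) (x : GaloisField 2 m) :
    GaloisField 2 m :=
  a 0 * x + ∑ j : Fin t,
    (a j.succ * x ^ (2 ^ (j.val + 1)) +
      (a j.succ) ^ (2 ^ (m - (j.val + 1))) * x ^ (2 ^ (m - (j.val + 1))))

/-- For `a ≠ 0` and `2t < m`, the radical of the symmetric bilinear form
`B_a(x,y) = Tr(y · L_a(x))` on `GF(2^m)` has at most `2^{2t}` elements (dimension at most
`2t`), so the rank of `B_a` is at least `m - 2t`. -/
theorem stmt16 (m t : ℕ) (hm : 1 ≤ m) (ht : 2 * t < m)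
    (a : Fin (t + 1) → GaloisField 2 m) (ha : a ≠ 0) :
    @Fintype.card
        {x : GaloisField 2 m //
          ∀ y : GaloisField 2 m,
            Algebra.trace (ZMod 2) (GaloisField 2 m) (y * La m t a x) = 0}
        (Fintype.ofFinite _)
      ≤ 2 ^ (2 * t) := by
  classical
  letI : Fintype (GaloisField 2 m) := Fintype.ofFinite _
  have hne2 : ∀ {u v : ℕ}, u < v → (2:ℕ) ^ u ≠ 2 ^ v :=
    fun h => Nat.ne_of_lt (Nat.pow_lt_pow_right one_lt_two h)
  have hne2' : ∀ {u v : ℕ}, u < v → (2:ℕ) ^ v ≠ 2 ^ u :=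
    fun h => (hne2 h).symm
  have hcard : Fintype.card (GaloisField 2 m) = 2 ^ m := by
    rw [← Nat.card_eq_fintype_card, GaloisField.card 2 m (by omega)]
  have hpc : ∀ x : GaloisField 2 m, x ^ 2 ^ m = x := fun x => by
    rw [← hcard]; exact FiniteField.pow_card x
  -- Step 1: radical condition implies La x = 0
  have hrad : ∀ x : GaloisField 2 m,
      (∀ y : GaloisField 2 m, Algebra.trace (ZMod 2) (GaloisField 2 m) (y * La m t a x) = 0) →
      La m t a x = 0 := by
    intro x h
    exact (traceForm_nondegenerate (ZMod 2) (GaloisField 2 m)).1 (La m t a x)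
      (fun y => by rw [Algebra.traceForm_apply, mul_comm]; exact h y)
  -- Step 2: the polynomial Q
  set Q : Polynomial (GaloisField 2 m) :=
    C (a 0 ^ 2 ^ t) * X ^ (2 ^ t) + ∑ j : Fin t,
      (C (a j.succ ^ 2 ^ t) * X ^ (2 ^ (t + (j.val + 1))) +
        C (a j.succ ^ 2 ^ (m - (j.val + 1) + t)) * X ^ (2 ^ (t - (j.val + 1)))) with hQdef
  have heval : ∀ x : GaloisField 2 m, Q.eval x = (La m t a x) ^ 2 ^ t := by
    intro x
    rw [La, add_pow_char_pow, sum_pow_char_pow]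
    simp only [hQdef, eval_add, eval_mul, eval_C, eval_pow, eval_X, eval_finset_sum]
    congr 1
    · rw [mul_pow]
    · apply Finset.sum_congr rfl
      intro j _
      have hjt : j.val + 1 ≤ t := j.isLt
      rw [add_pow_char_pow]
      congr 1
      · rw [mul_pow, ← pow_mul, ← pow_add, Nat.add_comm (j.val+1) t]
      · rw [mul_pow, ← pow_mul, ← pow_add, ← pow_mul, ← pow_add]
        congr 1
        have heq : m - (j.val + 1) + t = (t - (j.val + 1)) + m := by omega
        rw [heq, pow_add, pow_mul, hpc]
  -- Step 3: Q ≠ 0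
  have hQcoeff : ∀ i : Fin (t+1), a i ≠ 0 → ∃ k, Q.coeff k ≠ 0 := by
    intro i hi
    rcases Fin.eq_zero_or_eq_succ i with rfl | ⟨j0, rfl⟩
    · refine ⟨2 ^ t, ?_⟩
      have hco : Q.coeff (2 ^ t) = a 0 ^ 2 ^ t := by
        rw [hQdef, coeff_add, coeff_C_mul, coeff_X_pow, if_pos rfl, mul_one, finset_sum_coeff,
          Finset.sum_eq_zero, add_zero]
        intro j _
        have hjt : j.val < t := j.isLt
        rw [coeff_add, coeff_C_mul, coeff_X_pow, coeff_C_mul, coeff_X_pow,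
          if_neg (hne2 (by omega)), if_neg (hne2' (by omega)), mul_zero, mul_zero, add_zero]
      rw [hco]; exact pow_ne_zero _ hi
    · refine ⟨2 ^ (t + (j0.val + 1)), ?_⟩
      have hj0t : j0.val < t := j0.isLt
      have hco : Q.coeff (2 ^ (t + (j0.val + 1))) = a j0.succ ^ 2 ^ t := by
        rw [hQdef, coeff_add, coeff_C_mul, coeff_X_pow, if_neg (hne2' (by omega)),
          mul_zero, zero_add, finset_sum_coeff, Finset.sum_eq_single j0]
        · rw [coeff_add, coeff_C_mul, coeff_X_pow, if_pos rfl, mul_one,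
            coeff_C_mul, coeff_X_pow, if_neg (hne2' (by omega)), mul_zero, add_zero]
        · intro j _ hj
          have hjt : j.val < t := j.isLt
          have hjj : j.val ≠ j0.val := fun h => hj (Fin.ext h)
          rcases Nat.lt_or_ge j.val j0.val with h1 | h1
          · rw [coeff_add, coeff_C_mul, coeff_X_pow, coeff_C_mul, coeff_X_pow,
              if_neg (hne2' (by omega)), if_neg (hne2' (by omega)),
              mul_zero, mul_zero, add_zero]
          · have h2 : j0.val < j.val := by omega
            rw [coeff_add, coeff_C_mul, coeff_X_pow, coeff_C_mul, coeff_X_pow,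
              if_neg (hne2 (by omega)), if_neg (hne2' (by omega)),
              mul_zero, mul_zero, add_zero]
        · intro h; exact absurd (Finset.mem_univ j0) h
      rw [hco]; exact pow_ne_zero _ hi
  have hQne : Q ≠ 0 := by
    obtain ⟨i, hi⟩ := Function.ne_iff.mp ha
    obtain ⟨k, hk⟩ := hQcoeff i hi
    intro h; rw [h, coeff_zero] at hk; exact hk rfl
  -- Step 4: degree bound
  have hdeg : Q.natDegree ≤ 2 ^ (2 * t) := by
    rw [hQdef]
    refine le_trans (natDegree_add_le _ _) (max_le ?_ ?_)
    · refine le_trans (natDegree_C_mul_le _ _) ?_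
      rw [natDegree_X_pow]
      exact Nat.pow_le_pow_right (by norm_num) (by omega)
    · refine Polynomial.natDegree_sum_le_of_forall_le _ _ (fun j _ => ?_)
      have hjt : j.val < t := j.isLt
      refine le_trans (natDegree_add_le _ _) (max_le ?_ ?_) <;>
        refine le_trans (natDegree_C_mul_le _ _) ?_ <;>
        rw [natDegree_X_pow] <;>
        exact Nat.pow_le_pow_right (by norm_num) (by omega)
  -- Step 5: count
  have hsub : ∀ x : GaloisField 2 m,
      (∀ y : GaloisField 2 m, Algebra.trace (ZMod 2) (GaloisField 2 m) (y * La m t a x) = 0) →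
      x ∈ Q.roots.toFinset := by
    intro x hx
    rw [Multiset.mem_toFinset, mem_roots hQne]
    have hz := hrad x hx
    simp [IsRoot, heval x, hz]
  have hcc : @Fintype.card
      {x : GaloisField 2 m //
        ∀ y : GaloisField 2 m,
          Algebra.trace (ZMod 2) (GaloisField 2 m) (y * La m t a x) = 0}
      (Fintype.ofFinite _) =
      Fintype.card {x : GaloisField 2 m //
        ∀ y : GaloisField 2 m,
          Algebra.trace (ZMod 2) (GaloisField 2 m) (y * La m t a x) = 0} :=
    congrArg (@Fintype.card _) (Subsingleton.elim _ _)
  rw [hcc]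
  refine le_trans (Fintype.card_le_of_injective
    (β := {x : GaloisField 2 m // x ∈ Q.roots.toFinset})
    (fun z => ⟨z.1, hsub z.1 z.2⟩) ?_) ?_
  · intro z w h
    simp only [Subtype.mk.injEq] at h
    exact Subtype.ext h
  · rw [Fintype.card_coe]
    exact le_trans (Multiset.toFinset_card_le _) (le_trans Q.card_roots' hdeg)
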